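/- Let T be a Noetherian ring, let S be a subring of T which is a unique factorization domain satisfying: for every regular element t ∈ T and every associated prime P of T/tT, the height of S ∩ P is at most 1. Let x̃ ∈ S be a prime element of S, suppose x̃ is a regular element of T, and let P be a height one prime ideal of T with x̃ ∈ P. Then S ∩ P = x̃S. -/

import Mathlib

section Aux

/-- The height of an ideal `P`: the Krull dimension of the poset of primes contained in `P`. -/
noncomputable def idealHt {A : Type*} [CommRing A] (P : Ideal A) : WithBot (WithTop ℕ) :=
  Order.krullDim {Q : PrimeSpectrum A // Q.asIdeal ≤ P}

lemma aux_chain {A : Type*} [CommRing A] {P Q1 Q2 Q3 : Ideal A}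
    (h1 : Q1.IsPrime) (h2 : Q2.IsPrime) (h3 : Q3.IsPrime)
    (l12 : Q1 < Q2) (l23 : Q2 < Q3) (l3P : Q3 ≤ P)
    (hht : idealHt P ≤ 1) : False := by
  let α := {Q : PrimeSpectrum A // Q.asIdeal ≤ P}
  let a : α := ⟨⟨Q1, h1⟩, ((l12.trans l23).le).trans l3P⟩
  let b : α := ⟨⟨Q2, h2⟩, l23.le.trans l3P⟩
  let c : α := ⟨⟨Q3, h3⟩, l3P⟩
  have hab : a < b := by
    rw [Subtype.mk_lt_mk, ← PrimeSpectrum.asIdeal_lt_asIdeal]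
    exact l12
  have hbc : b < c := by
    rw [Subtype.mk_lt_mk, ← PrimeSpectrum.asIdeal_lt_asIdeal]
    exact l23
  let p : LTSeries α := ((RelSeries.singleton _ a).snoc b hab).snoc c
    (by exact hbc)
  have hlen : p.length = 2 := rfl
  have h2 := Order.LTSeries.length_le_krullDim p
  rw [hlen] at h2
  have : (2 : WithBot (WithTop ℕ)) ≤ 1 := le_trans h2 hht
  norm_num at this

lemma colon_primary {R : Type*} [CommRing R] {q : Ideal R} (hq : q.IsPrimary) {y : R}
    (hy : y ∉ q) :
    (q.colon (Ideal.span {y})).IsPrimary ∧ (q.colon (Ideal.span {y})).radical = q.radical := by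
  have hmem : ∀ r : R, r ∈ q.colon (Ideal.span {y}) ↔ r * y ∈ q := by
    intro r
    rw [Ideal.span, Submodule.mem_colon_span_singleton, smul_eq_mul]
  have hsub : q ≤ q.colon (Ideal.span {y}) := fun a ha => (hmem a).mpr (q.mul_mem_right y ha)
  have hsup : q.colon (Ideal.span {y}) ≤ q.radical := by
    intro a ha
    have h1 : y * a ∈ q := by rw [mul_comm]; exact (hmem a).mp ha
    exact ((Ideal.isPrimary_iff.mp hq).2 h1).resolve_left hy
  have hrad : (q.colon (Ideal.span {y})).radical = q.radical :=
    le_antisymm (by simpa [Ideal.radical_idem] using Ideal.radical_mono hsup)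
      (Ideal.radical_mono hsub)
  refine ⟨Ideal.isPrimary_iff.mpr ⟨?_, ?_⟩, hrad⟩
  · intro htop
    exact hy (by simpa using (hmem 1).mp (htop ▸ Submodule.mem_top))
  · intro a b hab
    have h1 : (a * y) * b ∈ q := by
      rw [show a * y * b = a * b * y by ring]
      exact (hmem (a * b)).mp hab
    rcases (Ideal.isPrimary_iff.mp hq).2 h1 with h | h
    · exact Or.inl ((hmem a).mpr h)
    · exact Or.inr (hrad ▸ h)

lemma mem_associatedPrimes_of_mem_minimalPrimes {R : Type*} [CommRing R] [IsNoetherianRing R]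
    {I P : Ideal R} (hP : P ∈ I.minimalPrimes) : P ∈ associatedPrimes R (R ⧸ I) := by
  classical
  obtain ⟨t, hinf, hprim, _hrad, hirr⟩ :=
    Submodule.IsLasker.exists_isMinimalPrimaryDecomposition (Submodule.isLasker R R) I
  have hPprime : P.IsPrime := hP.1.1
  have hIP : I ≤ P := hP.1.2
  obtain ⟨q, hqt, hqP⟩ := (hPprime.inf_le').mp (hinf.le.trans hIP)
  simp only [id_eq] at hqP
  have hqprim := hprim hqt
  have hIq : I ≤ q := hinf ▸ (Finset.inf_le hqt)
  have hradqP : Ideal.radical q ≤ P := (Ideal.radical_mono hqP).trans_eq hPprime.radical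
  have hradq : Ideal.radical q = P :=
    le_antisymm hradqP (hP.2 ⟨Ideal.isPrime_radical hqprim, hIq.trans Ideal.le_radical⟩ hradqP)
  obtain ⟨y, hy_mem, hy_not⟩ := SetLike.not_le_iff_exists.mp (hirr hqt)
  obtain ⟨hJprim, hJrad⟩ := colon_primary hqprim hy_not
  set J := q.colon (Ideal.span {y}) with hJ
  have hmem : ∀ r : R, r ∈ J ↔ r * y ∈ q := by
    intro r
    rw [hJ, Ideal.span, Submodule.mem_colon_span_singleton, smul_eq_mul]
  let g : R →ₗ[R] R ⧸ I := (I.mkQ).comp (LinearMap.mul R R y)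
  have hkerg : LinearMap.ker g = J := by
    ext r
    simp only [g, LinearMap.mem_ker, LinearMap.comp_apply, LinearMap.mul_apply',
      Submodule.mkQ_apply, Submodule.Quotient.mk_eq_zero]
    constructor
    · intro h
      exact (hmem r).mpr (by rw [mul_comm]; exact hIq h)
    · intro h
      have h1 : y * r ∈ q := by rw [mul_comm]; exact (hmem r).mp h
      rw [← hinf]
      refine Submodule.mem_finsetInf.mpr fun J' hJ' => ?_
      rcases eq_or_ne J' q with rfl | hne
      · exact h1
      · have : y ∈ J' := Finset.inf_le (f := id) (Finset.mem_erase.mpr ⟨hne, hJ'⟩) hy_mem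
        exact Ideal.mul_mem_right r J' this
  let ℓ : (R ⧸ J) →ₗ[R] R ⧸ I := Submodule.liftQ J g hkerg.ge
  have hinj : Function.Injective ℓ := by
    rw [← LinearMap.ker_eq_bot]
    exact Submodule.ker_liftQ_eq_bot J g hkerg.ge hkerg.le
  have hAss : associatedPrimes R (R ⧸ J) = {P} := by
    rw [associatedPrimes.eq_singleton_of_isPrimary hJprim, hJrad, hradq]
  exact associatedPrimes.subset_of_injective (f := ℓ) hinj (hAss ▸ rfl)

end Aux

lemma not_mem_minimalPrimes_of_regular {R : Type*} [CommRing R] [IsNoetherianRing R]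
    {x : R} (hx : x ∈ nonZeroDivisors R) {Q : Ideal R} (hQ : Q ∈ (⊥ : Ideal R).minimalPrimes) :
    x ∉ Q := by
  intro hxQ
  have hAss : Q ∈ associatedPrimes R (R ⧸ (⊥ : Ideal R)) :=
    mem_associatedPrimes_of_mem_minimalPrimes hQ
  have hAss' : Q ∈ associatedPrimes R R :=
    (LinearEquiv.AssociatedPrimes.eq (Submodule.quotEquivOfEqBot (⊥ : Ideal R) rfl)) ▸ hAss
  obtain ⟨hQp, z, hz⟩ := isAssociatedPrime_iff.mp hAss'
  rw [hz, Submodule.mem_colon_singleton, smul_eq_mul, Submodule.mem_bot] at hxQ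
  have hz0 : z = 0 := (mem_nonZeroDivisors_iff.mp hx).2 z (by rwa [mul_comm] at hxQ)
  apply hQp.ne_top
  rw [hz, hz0]
  rw [Ideal.eq_top_iff_one, Submodule.mem_colon_singleton]
  simp

theorem statement_9 (T : Type*) [CommRing T] [IsNoetherianRing T]
    (S : Subring T) [IsDomain S] [UniqueFactorizationMonoid S]
    (hS : ∀ t ∈ nonZeroDivisors T, ∀ P ∈ associatedPrimes T (T ⧸ Ideal.span {t}),
      idealHt (P.comap S.subtype) ≤ 1)
    (x : S) (hxprime : Prime x) (hxreg : (x : T) ∈ nonZeroDivisors T)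
    (P : Ideal T) (hP : P.IsPrime) (hPht : idealHt P = 1) (hxP : (x : T) ∈ P) :
    P.comap S.subtype = Ideal.span {x} := by
  have hx0 : (x : S) ≠ 0 := hxprime.ne_zero
  haveI : P.IsPrime := hP
  have hPmin : P ∈ (Ideal.span {(x : T)}).minimalPrimes := by
    refine ⟨⟨hP, (Ideal.span_singleton_le_iff_mem _).mpr hxP⟩, ?_⟩
    rintro Q ⟨hQp, hxQ⟩ hQP
    by_contra hPQ
    have hQltP : Q < P := lt_of_le_of_ne hQP (fun h => hPQ (h ▸ le_rfl))
    haveI := hQp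
    obtain ⟨Q', hQ'min, hQ'Q⟩ := Ideal.exists_minimalPrimes_le (bot_le : (⊥ : Ideal T) ≤ Q)
    have hQ'p : Q'.IsPrime := hQ'min.1.1
    rcases eq_or_lt_of_le hQ'Q with rfl | hlt
    · exact not_mem_minimalPrimes_of_regular hxreg hQ'min
        (hxQ (Ideal.mem_span_singleton_self _))
    · exact aux_chain hQ'p hQp hP hlt hQltP le_rfl (le_of_eq hPht)
  have hPAss : P ∈ associatedPrimes T (T ⧸ Ideal.span {(x : T)}) :=
    mem_associatedPrimes_of_mem_minimalPrimes hPmin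
  have hQht : idealHt (P.comap S.subtype) ≤ 1 := hS _ hxreg P hPAss
  have hQp : (P.comap S.subtype).IsPrime := Ideal.IsPrime.comap _
  have hle : Ideal.span {x} ≤ P.comap S.subtype :=
    (Ideal.span_singleton_le_iff_mem _).mpr (by simpa [Ideal.mem_comap] using hxP)
  refine le_antisymm ?_ hle
  by_contra hcon
  have hlt : Ideal.span {x} < P.comap S.subtype := hle.lt_of_ne (fun h => hcon h.ge)
  have hspan_prime : (Ideal.span {x} : Ideal S).IsPrime :=
    (Ideal.span_singleton_prime hx0).mpr hxprime
  have hbot : (⊥ : Ideal S) < Ideal.span {x} := by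
    rw [bot_lt_iff_ne_bot, Ne, Ideal.span_singleton_eq_bot]
    exact hx0
  exact aux_chain Ideal.bot_prime hspan_prime hQp hbot hlt le_rfl hQht
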